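/- There exists a constant C > 0 such that for every finitely supported function f : ℤ² → ℂ one has Σ_{n∈ℤ²} |(A f)(n)|² ≤ C · Σ_{n∈ℤ²} Λ(n)² |f(n)|², i.e. ‖A f‖_{ℓ²} ≤ √C · ‖Λ f‖_{ℓ²}. (This is the key bound in the Nelson-lemma proof that A is essentially self-adjoint.) -/
import Mathlib


open scoped ENNReal
open Filter

noncomputable section

/-- The Hilbert space `ℓ²(ℤ², ℂ)`. -/
abbrev H2 : Type := lp (fun _ : ℤ × ℤ => ℂ) 2

/-- The triangular-lattice Laplacian, acting pointwise on functions `ℤ² → ℂ`. -/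
def lapT (f : ℤ × ℤ → ℂ) : ℤ × ℤ → ℂ := fun n =>
  (1/6 : ℂ) * (f (n.1 + 1, n.2) + f (n.1 - 1, n.2) + f (n.1, n.2 + 1)
    + f (n.1, n.2 - 1) + f (n.1 + 1, n.2 - 1) + f (n.1 - 1, n.2 + 1))

/-- The symbol `F(x₁,x₂) = (1/3)(cos x₁ + cos x₂ + cos (x₁ - x₂))`. -/
def symbF (x : ℝ × ℝ) : ℝ := (1/3) * (Real.cos x.1 + Real.cos x.2 + Real.cos (x.1 - x.2))

/-- `∂₁ F`. -/
def d1F (x : ℝ × ℝ) : ℝ := -(1/3) * (Real.sin x.1 + Real.sin (x.1 - x.2))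

/-- `∂₂ F`. -/
def d2F (x : ℝ × ℝ) : ℝ := -(1/3) * (Real.sin x.2 - Real.sin (x.1 - x.2))

/-- Japanese bracket `⟨t⟩ = √(1/2 + t²)`. -/
def jap (t : ℝ) : ℝ := Real.sqrt (1/2 + t^2)

/-- The weight `Λ(n₁,n₂) = ⟨n₁⟩ + ⟨n₂⟩`. -/
def Lam (n : ℤ × ℤ) : ℝ := jap (n.1 : ℝ) + jap (n.2 : ℝ)

/-- The conjugate operator `A`, acting pointwise on functions `ℤ² → ℂ`. -/
def opA (f : ℤ × ℤ → ℂ) : ℤ × ℤ → ℂ := fun n =>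
  (Complex.I / 6) *
    (((n.1 : ℂ) + 1/2) * f (n.1 + 1, n.2) - ((n.1 : ℂ) - 1/2) * f (n.1 - 1, n.2)
      + ((n.2 : ℂ) + 1/2) * f (n.1, n.2 + 1) - ((n.2 : ℂ) - 1/2) * f (n.1, n.2 - 1)
      + ((n.2 : ℂ) - (n.1 : ℂ) + 1) * f (n.1 - 1, n.2 + 1)
      + ((n.1 : ℂ) - (n.2 : ℂ) + 1) * f (n.1 + 1, n.2 - 1))

/-- The perturbed Laplacian `Δ̃` with weight `m`, acting pointwise on functions `ℤ² → ℂ`: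
`(Δ̃ f)(n) = (1/6) Σ_{l ∼ n} f(l) / (√(m n) √(m l))`. -/
def lapPert (m : ℤ × ℤ → ℝ) (f : ℤ × ℤ → ℂ) : ℤ × ℤ → ℂ := fun n =>
  (1/6 : ℂ) *
    (f (n.1 + 1, n.2) / ((Real.sqrt (m n) * Real.sqrt (m (n.1 + 1, n.2)) : ℝ) : ℂ)
      + f (n.1 - 1, n.2) / ((Real.sqrt (m n) * Real.sqrt (m (n.1 - 1, n.2)) : ℝ) : ℂ)
      + f (n.1, n.2 + 1) / ((Real.sqrt (m n) * Real.sqrt (m (n.1, n.2 + 1)) : ℝ) : ℂ)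
      + f (n.1, n.2 - 1) / ((Real.sqrt (m n) * Real.sqrt (m (n.1, n.2 - 1)) : ℝ) : ℂ)
      + f (n.1 + 1, n.2 - 1) / ((Real.sqrt (m n) * Real.sqrt (m (n.1 + 1, n.2 - 1)) : ℝ) : ℂ)
      + f (n.1 - 1, n.2 + 1) / ((Real.sqrt (m n) * Real.sqrt (m (n.1 - 1, n.2 + 1)) : ℝ) : ℂ))

lemma abs_le_jap (t : ℝ) : |t| ≤ jap t := by
  rw [jap, ← Real.sqrt_sq_eq_abs]
  exact Real.sqrt_le_sqrt (by nlinarith)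

lemma half_le_jap (t : ℝ) : 1/2 ≤ jap t := by
  rw [jap]
  have : (1/2 : ℝ) = Real.sqrt (1/4) := by
    rw [show (1/4 : ℝ) = (1/2)^2 by norm_num, Real.sqrt_sq (by norm_num)]
  rw [this]
  exact Real.sqrt_le_sqrt (by nlinarith)

lemma Lam_facts (m : ℤ × ℤ) :
    |(m.1 : ℝ)| ≤ Lam m ∧ |(m.2 : ℝ)| ≤ Lam m ∧ 1 ≤ Lam m := by
  have h1 := abs_le_jap (m.1 : ℝ)
  have h2 := abs_le_jap (m.2 : ℝ)
  have h3 := half_le_jap (m.1 : ℝ)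
  have h4 := half_le_jap (m.2 : ℝ)
  have ha := abs_nonneg (m.1 : ℝ)
  have hb := abs_nonneg (m.2 : ℝ)
  refine ⟨?_, ?_, ?_⟩ <;> (rw [Lam]; linarith)

lemma sq_sum_six (a b c d e g : ℝ) :
    (a+b+c+d+e+g)^2 ≤ 6*(a^2+b^2+c^2+d^2+e^2+g^2) := by
  nlinarith [sq_nonneg (a-b), sq_nonneg (a-c), sq_nonneg (a-d), sq_nonneg (a-e), sq_nonneg (a-g),
    sq_nonneg (b-c), sq_nonneg (b-d), sq_nonneg (b-e), sq_nonneg (b-g), sq_nonneg (c-d),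
    sq_nonneg (c-e), sq_nonneg (c-g), sq_nonneg (d-e), sq_nonneg (d-g), sq_nonneg (e-g)]

set_option maxHeartbeats 1000000 in
lemma opA_pointwise (f : ℤ × ℤ → ℂ) (n : ℤ × ℤ) :
    ‖opA f n‖^2 ≤ (1/6) *
      (|(n.1:ℝ)+1/2|^2 * ‖f (n+(1,0))‖^2 + |(n.1:ℝ)-1/2|^2 * ‖f (n+(-1,0))‖^2
        + |(n.2:ℝ)+1/2|^2 * ‖f (n+(0,1))‖^2 + |(n.2:ℝ)-1/2|^2 * ‖f (n+(0,-1))‖^2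
        + |(n.2:ℝ)-(n.1:ℝ)+1|^2 * ‖f (n+(-1,1))‖^2
        + |(n.1:ℝ)-(n.2:ℝ)+1|^2 * ‖f (n+(1,-1))‖^2) := by
  obtain ⟨p, q⟩ := n
  have ha1 : ((p,q) : ℤ×ℤ) + (1,0) = (p+1, q) := by simp
  have ha2 : ((p,q) : ℤ×ℤ) + (-1,0) = (p-1, q) := by simp [sub_eq_add_neg]
  have ha3 : ((p,q) : ℤ×ℤ) + (0,1) = (p, q+1) := by simp
  have ha4 : ((p,q) : ℤ×ℤ) + (0,-1) = (p, q-1) := by simp [sub_eq_add_neg]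
  have ha5 : ((p,q) : ℤ×ℤ) + (-1,1) = (p-1, q+1) := by simp [Prod.ext_iff, sub_eq_add_neg]
  have ha6 : ((p,q) : ℤ×ℤ) + (1,-1) = (p+1, q-1) := by simp [Prod.ext_iff, sub_eq_add_neg]
  rw [ha1, ha2, ha3, ha4, ha5, ha6, show opA f (p,q) = (Complex.I / 6) *
    (((p : ℂ) + 1/2) * f (p + 1, q) - ((p : ℂ) - 1/2) * f (p - 1, q)
      + ((q : ℂ) + 1/2) * f (p, q + 1) - ((q : ℂ) - 1/2) * f (p, q - 1)
      + ((q : ℂ) - (p : ℂ) + 1) * f (p - 1, q + 1)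
      + ((p : ℂ) - (q : ℂ) + 1) * f (p + 1, q - 1)) from rfl]
  set t1 := ((p : ℂ) + 1/2) * f (p + 1, q) with ht1
  set t2 := ((p : ℂ) - 1/2) * f (p - 1, q) with ht2
  set t3 := ((q : ℂ) + 1/2) * f (p, q + 1) with ht3
  set t4 := ((q : ℂ) - 1/2) * f (p, q - 1) with ht4
  set t5 := ((q : ℂ) - (p : ℂ) + 1) * f (p - 1, q + 1) with ht5
  set t6 := ((p : ℂ) - (q : ℂ) + 1) * f (p + 1, q - 1) with ht6
  have hn : ‖Complex.I / 6 * (t1 - t2 + t3 - t4 + t5 + t6)‖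
      = (1/6) * ‖t1 - t2 + t3 - t4 + t5 + t6‖ := by
    rw [norm_mul, norm_div, Complex.norm_I]
    norm_num
  have htri : ‖t1 - t2 + t3 - t4 + t5 + t6‖ ≤ ‖t1‖+‖t2‖+‖t3‖+‖t4‖+‖t5‖+‖t6‖ := by
    have h6 := norm_add_le (t1 - t2 + t3 - t4 + t5) t6
    have h5 := norm_add_le (t1 - t2 + t3 - t4) t5
    have h4 := norm_sub_le (t1 - t2 + t3) t4
    have h3 := norm_add_le (t1 - t2) t3
    have h2 := norm_sub_le t1 t2
    linarith
  have e1 : ‖t1‖ = |(p:ℝ)+1/2| * ‖f (p+1, q)‖ := by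
    rw [ht1, norm_mul, show ((p : ℂ) + 1/2) = ((((p:ℝ)+1/2 : ℝ)) : ℂ) by push_cast; ring,
      Complex.norm_real, Real.norm_eq_abs]
  have e2 : ‖t2‖ = |(p:ℝ)-1/2| * ‖f (p-1, q)‖ := by
    rw [ht2, norm_mul, show ((p : ℂ) - 1/2) = ((((p:ℝ)-1/2 : ℝ)) : ℂ) by push_cast; ring,
      Complex.norm_real, Real.norm_eq_abs]
  have e3 : ‖t3‖ = |(q:ℝ)+1/2| * ‖f (p, q+1)‖ := by
    rw [ht3, norm_mul, show ((q : ℂ) + 1/2) = ((((q:ℝ)+1/2 : ℝ)) : ℂ) by push_cast; ring,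
      Complex.norm_real, Real.norm_eq_abs]
  have e4 : ‖t4‖ = |(q:ℝ)-1/2| * ‖f (p, q-1)‖ := by
    rw [ht4, norm_mul, show ((q : ℂ) - 1/2) = ((((q:ℝ)-1/2 : ℝ)) : ℂ) by push_cast; ring,
      Complex.norm_real, Real.norm_eq_abs]
  have e5 : ‖t5‖ = |(q:ℝ)-(p:ℝ)+1| * ‖f (p-1, q+1)‖ := by
    rw [ht5, norm_mul, show ((q : ℂ) - (p:ℂ) + 1) = ((((q:ℝ)-(p:ℝ)+1 : ℝ)) : ℂ) by push_cast; ring,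
      Complex.norm_real, Real.norm_eq_abs]
  have e6 : ‖t6‖ = |(p:ℝ)-(q:ℝ)+1| * ‖f (p+1, q-1)‖ := by
    rw [ht6, norm_mul, show ((p : ℂ) - (q:ℂ) + 1) = ((((p:ℝ)-(q:ℝ)+1 : ℝ)) : ℂ) by push_cast; ring,
      Complex.norm_real, Real.norm_eq_abs]
  rw [hn]
  have hsq := sq_sum_six ‖t1‖ ‖t2‖ ‖t3‖ ‖t4‖ ‖t5‖ ‖t6‖
  have hnn : (0:ℝ) ≤ ‖t1‖+‖t2‖+‖t3‖+‖t4‖+‖t5‖+‖t6‖ := by positivity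
  have hb : ((1/6:ℝ) * ‖t1 - t2 + t3 - t4 + t5 + t6‖)^2
      ≤ (1/36) * (‖t1‖+‖t2‖+‖t3‖+‖t4‖+‖t5‖+‖t6‖)^2 := by
    rw [mul_pow]
    have := pow_le_pow_left₀ (norm_nonneg _) htri 2
    nlinarith [this]
  refine hb.trans ?_
  rw [e1, e2, e3, e4, e5, e6] at hsq ⊢
  simp only [mul_pow] at hsq ⊢
  nlinarith [hsq]

lemma bound_helper (A B L x : ℝ) (hA : |A| ≤ L) (hB : |B| ≤ L) (h1 : 1 ≤ L)
    (hx : |x| ≤ |A| + |B| + 1) : x^2 ≤ 9 * L^2 := by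
  have h0 : |A| + |B| + 1 ≤ 3 * L := by linarith
  have h2 : |x|^2 ≤ (3*L)^2 := by
    have hxn := abs_nonneg x
    nlinarith
  rw [sq_abs] at h2
  nlinarith

lemma cb1 (m : ℤ × ℤ) : |((m - ((1:ℤ),(0:ℤ))).1 : ℝ) + 1/2|^2 ≤ 9 * Lam m ^ 2 := by
  obtain ⟨hA, hB, h1⟩ := Lam_facts m
  have e1 : ((m - ((1:ℤ),(0:ℤ))).1 : ℝ) = (m.1:ℝ) - 1 := by
    push_cast [Prod.fst_sub]; ring
  have e2 : ((m - ((1:ℤ),(0:ℤ))).2 : ℝ) = (m.2:ℝ) - 0 := by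
    push_cast [Prod.snd_sub]; ring
  simp only [e1, e2, sq_abs]
  refine bound_helper ((m.1:ℝ)) ((m.2:ℝ)) (Lam m) _ hA hB h1 ?_
  rw [abs_le]
  constructor <;>
    nlinarith [le_abs_self ((m.1:ℝ)), neg_abs_le ((m.1:ℝ)), le_abs_self ((m.2:ℝ)),
      neg_abs_le ((m.2:ℝ)), abs_nonneg ((m.1:ℝ)), abs_nonneg ((m.2:ℝ))]

lemma cb2 (m : ℤ × ℤ) : |((m - ((-1:ℤ),(0:ℤ))).1 : ℝ) - 1/2|^2 ≤ 9 * Lam m ^ 2 := by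
  obtain ⟨hA, hB, h1⟩ := Lam_facts m
  have e1 : ((m - ((-1:ℤ),(0:ℤ))).1 : ℝ) = (m.1:ℝ) - -1 := by
    push_cast [Prod.fst_sub]; ring
  have e2 : ((m - ((-1:ℤ),(0:ℤ))).2 : ℝ) = (m.2:ℝ) - 0 := by
    push_cast [Prod.snd_sub]; ring
  simp only [e1, e2, sq_abs]
  refine bound_helper ((m.1:ℝ)) ((m.2:ℝ)) (Lam m) _ hA hB h1 ?_
  rw [abs_le]
  constructor <;>
    nlinarith [le_abs_self ((m.1:ℝ)), neg_abs_le ((m.1:ℝ)), le_abs_self ((m.2:ℝ)),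
      neg_abs_le ((m.2:ℝ)), abs_nonneg ((m.1:ℝ)), abs_nonneg ((m.2:ℝ))]

lemma cb3 (m : ℤ × ℤ) : |((m - ((0:ℤ),(1:ℤ))).2 : ℝ) + 1/2|^2 ≤ 9 * Lam m ^ 2 := by
  obtain ⟨hA, hB, h1⟩ := Lam_facts m
  have e1 : ((m - ((0:ℤ),(1:ℤ))).1 : ℝ) = (m.1:ℝ) - 0 := by
    push_cast [Prod.fst_sub]; ring
  have e2 : ((m - ((0:ℤ),(1:ℤ))).2 : ℝ) = (m.2:ℝ) - 1 := by
    push_cast [Prod.snd_sub]; ring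
  simp only [e1, e2, sq_abs]
  refine bound_helper ((m.1:ℝ)) ((m.2:ℝ)) (Lam m) _ hA hB h1 ?_
  rw [abs_le]
  constructor <;>
    nlinarith [le_abs_self ((m.1:ℝ)), neg_abs_le ((m.1:ℝ)), le_abs_self ((m.2:ℝ)),
      neg_abs_le ((m.2:ℝ)), abs_nonneg ((m.1:ℝ)), abs_nonneg ((m.2:ℝ))]

lemma cb4 (m : ℤ × ℤ) : |((m - ((0:ℤ),(-1:ℤ))).2 : ℝ) - 1/2|^2 ≤ 9 * Lam m ^ 2 := by
  obtain ⟨hA, hB, h1⟩ := Lam_facts m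
  have e1 : ((m - ((0:ℤ),(-1:ℤ))).1 : ℝ) = (m.1:ℝ) - 0 := by
    push_cast [Prod.fst_sub]; ring
  have e2 : ((m - ((0:ℤ),(-1:ℤ))).2 : ℝ) = (m.2:ℝ) - -1 := by
    push_cast [Prod.snd_sub]; ring
  simp only [e1, e2, sq_abs]
  refine bound_helper ((m.1:ℝ)) ((m.2:ℝ)) (Lam m) _ hA hB h1 ?_
  rw [abs_le]
  constructor <;>
    nlinarith [le_abs_self ((m.1:ℝ)), neg_abs_le ((m.1:ℝ)), le_abs_self ((m.2:ℝ)),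
      neg_abs_le ((m.2:ℝ)), abs_nonneg ((m.1:ℝ)), abs_nonneg ((m.2:ℝ))]

lemma cb5 (m : ℤ × ℤ) : |((m - ((-1:ℤ),(1:ℤ))).2 : ℝ) - ((m - ((-1:ℤ),(1:ℤ))).1 : ℝ) + 1|^2 ≤ 9 * Lam m ^ 2 := by
  obtain ⟨hA, hB, h1⟩ := Lam_facts m
  have e1 : ((m - ((-1:ℤ),(1:ℤ))).1 : ℝ) = (m.1:ℝ) - -1 := by
    push_cast [Prod.fst_sub]; ring
  have e2 : ((m - ((-1:ℤ),(1:ℤ))).2 : ℝ) = (m.2:ℝ) - 1 := by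
    push_cast [Prod.snd_sub]; ring
  simp only [e1, e2, sq_abs]
  refine bound_helper ((m.1:ℝ)) ((m.2:ℝ)) (Lam m) _ hA hB h1 ?_
  rw [abs_le]
  constructor <;>
    nlinarith [le_abs_self ((m.1:ℝ)), neg_abs_le ((m.1:ℝ)), le_abs_self ((m.2:ℝ)),
      neg_abs_le ((m.2:ℝ)), abs_nonneg ((m.1:ℝ)), abs_nonneg ((m.2:ℝ))]

lemma cb6 (m : ℤ × ℤ) : |((m - ((1:ℤ),(-1:ℤ))).1 : ℝ) - ((m - ((1:ℤ),(-1:ℤ))).2 : ℝ) + 1|^2 ≤ 9 * Lam m ^ 2 := by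
  obtain ⟨hA, hB, h1⟩ := Lam_facts m
  have e1 : ((m - ((1:ℤ),(-1:ℤ))).1 : ℝ) = (m.1:ℝ) - 1 := by
    push_cast [Prod.fst_sub]; ring
  have e2 : ((m - ((1:ℤ),(-1:ℤ))).2 : ℝ) = (m.2:ℝ) - -1 := by
    push_cast [Prod.snd_sub]; ring
  simp only [e1, e2, sq_abs]
  refine bound_helper ((m.1:ℝ)) ((m.2:ℝ)) (Lam m) _ hA hB h1 ?_
  rw [abs_le]
  constructor <;>
    nlinarith [le_abs_self ((m.1:ℝ)), neg_abs_le ((m.1:ℝ)), le_abs_self ((m.2:ℝ)),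
      neg_abs_le ((m.2:ℝ)), abs_nonneg ((m.1:ℝ)), abs_nonneg ((m.2:ℝ))]


/-- the Nelson-lemma bound `‖A f‖ ≤ √C ‖Λ f‖` on finitely supported functions. -/
theorem opA_bounded_by_weight :
    ∃ C > 0, ∀ f : ℤ × ℤ → ℂ, (Function.support f).Finite →
      ∑' n : ℤ × ℤ, ‖opA f n‖ ^ 2 ≤ C * ∑' n : ℤ × ℤ, Lam n ^ 2 * ‖f n‖ ^ 2 := by
  classical
  refine ⟨9, by norm_num, ?_⟩
  intro f hf
  set s : Finset (ℤ × ℤ) := hf.toFinset with hs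
  have hfz : ∀ b ∉ s, f b = 0 := by
    intro b hb
    by_contra h
    exact hb (by simpa [hs, Set.Finite.mem_toFinset, Function.mem_support] using h)
  have hT : Summable (fun m : ℤ × ℤ => Lam m ^ 2 * ‖f m‖ ^ 2) :=
    summable_of_ne_finset_zero (s := s) (fun b hb => by simp [hfz b hb])
  have key : ∀ (c : ℤ × ℤ → ℝ) (e : ℤ × ℤ), (∀ m : ℤ × ℤ, c (m - e) ^ 2 ≤ 9 * Lam m ^ 2) →
      Summable (fun n : ℤ × ℤ => c n ^ 2 * ‖f (n + e)‖ ^ 2) ∧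
      ∑' n : ℤ × ℤ, c n ^ 2 * ‖f (n + e)‖ ^ 2
        ≤ 9 * ∑' m : ℤ × ℤ, Lam m ^ 2 * ‖f m‖ ^ 2 := by
    intro c e hc
    have hsum2 : Summable (fun m : ℤ × ℤ => c (m - e) ^ 2 * ‖f m‖ ^ 2) :=
      summable_of_ne_finset_zero (s := s) (fun b hb => by simp [hfz b hb])
    have hfun : (fun n : ℤ × ℤ => c n ^ 2 * ‖f (n + e)‖ ^ 2)
        = (fun m : ℤ × ℤ => c (m - e) ^ 2 * ‖f m‖ ^ 2) ∘ (Equiv.addRight e) := by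
      funext n; simp [add_sub_cancel_right]
    have hsum1 : Summable (fun n : ℤ × ℤ => c n ^ 2 * ‖f (n + e)‖ ^ 2) := by
      rw [hfun]; exact ((Equiv.addRight e).summable_iff).2 hsum2
    refine ⟨hsum1, ?_⟩
    have heq : ∑' n : ℤ × ℤ, c n ^ 2 * ‖f (n + e)‖ ^ 2
        = ∑' m : ℤ × ℤ, c (m - e) ^ 2 * ‖f m‖ ^ 2 := by
      rw [hfun]
      exact (Equiv.addRight e).tsum_eq (fun m : ℤ × ℤ => c (m - e) ^ 2 * ‖f m‖ ^ 2)
    rw [heq, show (9:ℝ) * ∑' m : ℤ × ℤ, Lam m ^ 2 * ‖f m‖ ^ 2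
        = ∑' m : ℤ × ℤ, 9 * (Lam m ^ 2 * ‖f m‖ ^ 2) from (tsum_mul_left (a := (9:ℝ)) (f := fun m : ℤ × ℤ => Lam m ^ 2 * ‖f m‖ ^ 2)).symm]
    refine Summable.tsum_le_tsum (fun m => ?_) hsum2 (hT.mul_left 9)
    calc c (m - e) ^ 2 * ‖f m‖ ^ 2 ≤ 9 * Lam m ^ 2 * ‖f m‖ ^ 2 :=
          mul_le_mul_of_nonneg_right (hc m) (sq_nonneg _)
      _ = 9 * (Lam m ^ 2 * ‖f m‖ ^ 2) := by ring
  obtain ⟨hg1, ht1⟩ := key (fun n => |(n.1:ℝ)+1/2|) (1,0) (fun m => cb1 m)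
  obtain ⟨hg2, ht2⟩ := key (fun n => |(n.1:ℝ)-1/2|) (-1,0) (fun m => cb2 m)
  obtain ⟨hg3, ht3⟩ := key (fun n => |(n.2:ℝ)+1/2|) (0,1) (fun m => cb3 m)
  obtain ⟨hg4, ht4⟩ := key (fun n => |(n.2:ℝ)-1/2|) (0,-1) (fun m => cb4 m)
  obtain ⟨hg5, ht5⟩ := key (fun n => |(n.2:ℝ)-(n.1:ℝ)+1|) (-1,1) (fun m => cb5 m)
  obtain ⟨hg6, ht6⟩ := key (fun n => |(n.1:ℝ)-(n.2:ℝ)+1|) (1,-1) (fun m => cb6 m)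
  set g1 : ℤ × ℤ → ℝ := fun n => |(n.1:ℝ)+1/2| ^ 2 * ‖f (n + (1,0))‖ ^ 2 with hgd1
  set g2 : ℤ × ℤ → ℝ := fun n => |(n.1:ℝ)-1/2| ^ 2 * ‖f (n + (-1,0))‖ ^ 2 with hgd2
  set g3 : ℤ × ℤ → ℝ := fun n => |(n.2:ℝ)+1/2| ^ 2 * ‖f (n + (0,1))‖ ^ 2 with hgd3
  set g4 : ℤ × ℤ → ℝ := fun n => |(n.2:ℝ)-1/2| ^ 2 * ‖f (n + (0,-1))‖ ^ 2 with hgd4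
  set g5 : ℤ × ℤ → ℝ := fun n => |(n.2:ℝ)-(n.1:ℝ)+1| ^ 2 * ‖f (n + (-1,1))‖ ^ 2 with hgd5
  set g6 : ℤ × ℤ → ℝ := fun n => |(n.1:ℝ)-(n.2:ℝ)+1| ^ 2 * ‖f (n + (1,-1))‖ ^ 2 with hgd6
  have h12 : Summable (fun n => g1 n + g2 n) := hg1.add hg2
  have h123 : Summable (fun n => g1 n + g2 n + g3 n) := h12.add hg3
  have h1234 : Summable (fun n => g1 n + g2 n + g3 n + g4 n) := h123.add hg4
  have h12345 : Summable (fun n => g1 n + g2 n + g3 n + g4 n + g5 n) := h1234.add hg5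
  have hG : Summable (fun n => g1 n + g2 n + g3 n + g4 n + g5 n + g6 n) := h12345.add hg6
  have hG' : Summable (fun n => (1/6 : ℝ) * (g1 n + g2 n + g3 n + g4 n + g5 n + g6 n)) :=
    hG.mul_left _
  have hle : ∀ n : ℤ × ℤ, ‖opA f n‖ ^ 2
      ≤ (1/6 : ℝ) * (g1 n + g2 n + g3 n + g4 n + g5 n + g6 n) := fun n => opA_pointwise f n
  have hLHS : Summable (fun n : ℤ × ℤ => ‖opA f n‖ ^ 2) :=
    Summable.of_nonneg_of_le (fun n => sq_nonneg _) hle hG'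
  have e6 := Summable.tsum_add h12345 hg6
  have e5 := Summable.tsum_add h1234 hg5
  have e4 := Summable.tsum_add h123 hg4
  have e3 := Summable.tsum_add h12 hg3
  have e2 := Summable.tsum_add hg1 hg2
  have Tnn : 0 ≤ ∑' m : ℤ × ℤ, Lam m ^ 2 * ‖f m‖ ^ 2 :=
    tsum_nonneg (fun m => by positivity)
  calc ∑' n : ℤ × ℤ, ‖opA f n‖ ^ 2
      ≤ ∑' n : ℤ × ℤ, (1/6 : ℝ) * (g1 n + g2 n + g3 n + g4 n + g5 n + g6 n) :=
        Summable.tsum_le_tsum hle hLHS hG'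
    _ = (1/6 : ℝ) * ∑' n : ℤ × ℤ, (g1 n + g2 n + g3 n + g4 n + g5 n + g6 n) := tsum_mul_left
    _ = (1/6 : ℝ) * ((((((∑' n, g1 n) + ∑' n, g2 n) + ∑' n, g3 n) + ∑' n, g4 n)
          + ∑' n, g5 n) + ∑' n, g6 n) := by rw [e6, e5, e4, e3, e2]
    _ ≤ 9 * ∑' m : ℤ × ℤ, Lam m ^ 2 * ‖f m‖ ^ 2 := by linarith
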